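/- The comultiplication Δ on the enveloping^{6-th} algebra U determined by Δ(q) = q⊗q and Δ(x) = (x + kqx − xq)⊗1 + 1⊗(x + kqx − xq) + (1−k)qx⊗q + (1−k)q⊗qx for x ∈ L is a well-defined algebra homomorphism U → U⊗U; i.e., Δ applied to the defining relation [x,y]^ − xy + yx + xyq − yxq − kxqy + kyqx vanishes in U⊗U. -/

import Mathlib

noncomputable section

/-- The free `K`-vector space on `X ⊕ {q̃}`. -/
abbrev FreeInvModule (K : Type*) [Field K] (X : Type*) : Type _ := (X ⊕ Unit) →₀ K

/-- The generator `q̃` inside the tensor algebra `T(V)`. -/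
def qTilde (K : Type*) [Field K] (X : Type*) : TensorAlgebra K (FreeInvModule K X) :=
  TensorAlgebra.ι K (Finsupp.single (Sum.inr ()) 1)

/-- The relations generating the ideal `I`: `q̃⊗q̃ = q̃` and `q̃⊗a⊗q̃ = q̃⊗a` for all `a`. -/
inductive InvRel (K : Type*) [Field K] (X : Type*) :
    TensorAlgebra K (FreeInvModule K X) → TensorAlgebra K (FreeInvModule K X) → Prop
  | idem : InvRel K X (qTilde K X * qTilde K X) (qTilde K X)
  | inv (a : TensorAlgebra K (FreeInvModule K X)) :
      InvRel K X (qTilde K X * a * qTilde K X) (qTilde K X * a)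

/-- The free invariant algebra `Â = T(V)/I`. -/
abbrev FreeInvAlg (K : Type*) [Field K] (X : Type*) : Type _ := RingQuot (InvRel K X)

/-- `q̂ = q̃ + I`. -/
def qHat (K : Type*) [Field K] (X : Type*) : FreeInvAlg K X :=
  RingQuot.mkAlgHom K (InvRel K X) (qTilde K X)

variable (K : Type*) [Field K]

/-- The linear embedding `L → Â` extending `î` on the basis `X = {x_j}`. -/
def lHat (J : Type*) (L : Type*) [AddCommGroup L] [Module K L] (b : Module.Basis J K L) :
    L →ₗ[K] FreeInvAlg K J :=
  (RingQuot.mkAlgHom K (InvRel K J)).toLinearMap ∘ₗ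
    (TensorAlgebra.ι K (M := FreeInvModule K J)) ∘ₗ
      (Finsupp.lmapDomain K K Sum.inl) ∘ₗ b.repr.toLinearMap

/-- The relations generating the ideal `R`:
`[x,y]^ = x̂ŷ - ŷx̂ - x̂ŷq̂ + ŷx̂q̂ + k x̂q̂ŷ - k ŷq̂x̂` for all `x, y ∈ L`. -/
inductive LieRel (J : Type*) (L : Type*) [LieRing L] [LieAlgebra K L]
    (b : Module.Basis J K L) (c : K) : FreeInvAlg K J → FreeInvAlg K J → Prop
  | rel (x y : L) : LieRel J L b c (lHat K J L b ⁅x, y⁆)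
      (lHat K J L b x * lHat K J L b y - lHat K J L b y * lHat K J L b x
        - lHat K J L b x * lHat K J L b y * qHat K J
        + lHat K J L b y * lHat K J L b x * qHat K J
        + c • (lHat K J L b x * qHat K J * lHat K J L b y)
        - c • (lHat K J L b y * qHat K J * lHat K J L b x))

/-- The enveloping⁶ᵗʰ algebra `U = Â/R`. -/
abbrev EnvLie (J : Type*) (L : Type*) [LieRing L] [LieAlgebra K L]
    (b : Module.Basis J K L) (c : K) : Type _ := RingQuot (LieRel K J L b c)

/-- `q̄ = q̂ + R`. -/
def qBar (J : Type*) (L : Type*) [LieRing L] [LieAlgebra K L]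
    (b : Module.Basis J K L) (c : K) : EnvLie K J L b c :=
  RingQuot.mkAlgHom K (LieRel K J L b c) (qHat K J)

/-- The canonical linear map `i : L → U`, `i(x) = x̂ + R`. -/
def iEnv (J : Type*) (L : Type*) [LieRing L] [LieAlgebra K L]
    (b : Module.Basis J K L) (c : K) : L →ₗ[K] EnvLie K J L b c :=
  (RingQuot.mkAlgHom K (LieRel K J L b c)).toLinearMap ∘ₗ lHat K J L b

open scoped TensorProduct

open scoped TensorProduct

section Aux
variable {K : Type*} [Field K] {A : Type*} [Ring A] [Algebra K A]
variable (c : K) (q : A)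

/-- `s(a) = a + c qa - aq`. -/
def sEl6 (a : A) : A := a + c • (q * a) - a * q

variable {q}

section
variable (hinv : ∀ w : A, q * w * q = q * w)
include hinv

lemma hq6 : q * q = q := by simpa using hinv 1

-- right-assoc rules
lemma rb1 (w : A) : q * (q * w) = q * w := by rw [← mul_assoc, hq6 hinv]
lemma rb2 (a : A) : q * (a * q) = q * a := by rw [← mul_assoc, hinv]
lemma rb3 (a w : A) : q * (a * (q * w)) = q * (a * w) := by
  rw [← mul_assoc, ← mul_assoc, show q * a * q = q * a from hinv a, mul_assoc]
lemma rb4 (a b : A) : q * (a * (b * q)) = q * (a * b) := by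
  rw [← mul_assoc, ← mul_assoc, mul_assoc q a b, hinv]
lemma rb5 (a w : A) : a * (q * (q * w)) = a * (q * w) := by rw [rb1 hinv]
lemma rb6 (a b : A) : a * (q * (b * q)) = a * (q * b) := by rw [rb2 hinv]

-- binary-form micro lemmas (as they appear after tmul_mul_tmul)
lemma m2 (a : A) : (q * a) * q = q * a := hinv a
lemma m3 (a : A) : q * (q * a) = q * a := rb1 hinv a
lemma m4 (a : A) : sEl6 c q a * q = c • (q * a) := by
  simp only [sEl6, sub_mul, add_mul, smul_mul_assoc, mul_assoc, rb2 hinv, hq6 hinv]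
  abel
lemma m5 (a : A) : q * sEl6 c q a = c • (q * a) := by
  simp only [sEl6, mul_sub, mul_add, mul_smul_comm, rb1 hinv, rb2 hinv]
  abel
lemma m8 (a b : A) : (q * a) * (q * b) = q * (a * b) := by
  rw [mul_assoc, rb3 hinv]
lemma m6 (a b : A) : sEl6 c q a * (q * b) = c • (q * (a * b)) := by
  simp only [sEl6, sub_mul, add_mul, smul_mul_assoc, m8 hinv, mul_assoc, rb1 hinv, rb2 hinv,
    rb3 hinv]
  abel
lemma m7 (a b : A) : (q * a) * sEl6 c q b = c • (q * (a * b)) := by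
  simp only [sEl6, mul_sub, mul_add, mul_smul_comm, m8 hinv, mul_assoc, rb1 hinv, rb2 hinv,
    rb3 hinv, rb4 hinv]
  abel
lemma m10 (a b : A) : (sEl6 c q a * sEl6 c q b) * q = (c * c) • (q * (a * b)) := by
  rw [mul_assoc, m4 c hinv, mul_smul_comm, m6 c hinv, smul_smul]
lemma m10' (a b : A) : q * (sEl6 c q a * sEl6 c q b) = (c * c) • (q * (a * b)) := by
  rw [← mul_assoc, m5 c hinv, smul_mul_assoc, m7 c hinv, smul_smul]


lemma ss6 (a b : A) :
    sEl6 c q a * sEl6 c q b = a * b - a * (b * q) + (c * c) • (q * (a * b)) := by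
  simp only [sEl6, sub_mul, mul_sub, add_mul, mul_add, smul_mul_assoc, mul_smul_comm,
    smul_smul, mul_assoc, rb1 hinv, rb2 hinv, rb3 hinv, rb4 hinv, rb5 hinv, rb6 hinv]
  module

variable {u v z : A}
  (hz : z = u * v - v * u - u * v * q + v * u * q + c • (u * q * v) - c • (v * q * u))
include hz

lemma qz6 : q * z = c • (q * (u * v)) - c • (q * (v * u)) := by
  rw [hz]
  simp only [mul_sub, mul_add, mul_smul_comm, mul_assoc, rb1 hinv, rb2 hinv, rb3 hinv,
    rb4 hinv]
  module

lemma zq6 : z * q = c • (u * (q * v)) - c • (v * (q * u)) := by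
  rw [hz]
  simp only [sub_mul, add_mul, smul_mul_assoc, mul_assoc, hq6 hinv, rb1 hinv, rb2 hinv,
    rb3 hinv, rb4 hinv, rb5 hinv, rb6 hinv]
  module

lemma sz6 : sEl6 c q z = sEl6 c q u * sEl6 c q v - sEl6 c q v * sEl6 c q u := by
  rw [ss6 c hinv u v, ss6 c hinv v u]
  show z + c • (q * z) - z * q = _
  rw [qz6 c hinv hz, zq6 c hinv hz, hz]
  simp only [mul_assoc, smul_smul]
  module

end

variable (q)

/-- `D(a) = s(a)⊗1 + 1⊗s(a) + (1-c)(qa⊗q + q⊗qa)`. -/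
noncomputable def DEl6 (a : A) : A ⊗[K] A :=
  sEl6 c q a ⊗ₜ[K] (1 : A) + (1 : A) ⊗ₜ[K] sEl6 c q a
    + (1 - c) • ((q * a) ⊗ₜ[K] q) + (1 - c) • (q ⊗ₜ[K] (q * a))

lemma DEl6_add (a a' : A) : DEl6 c q (a + a') = DEl6 c q a + DEl6 c q a' := by
  simp only [DEl6, sEl6, mul_add, add_mul, smul_add, TensorProduct.add_tmul,
    TensorProduct.tmul_add, TensorProduct.sub_tmul, TensorProduct.tmul_sub]
  module

lemma DEl6_smul (r : K) (a : A) : DEl6 c q (r • a) = r • DEl6 c q a := by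
  simp only [DEl6, sEl6, mul_smul_comm, smul_mul_assoc, smul_add, smul_sub, smul_smul,
    TensorProduct.smul_tmul', TensorProduct.tmul_smul, ← TensorProduct.smul_tmul',
    TensorProduct.sub_tmul, TensorProduct.tmul_sub, TensorProduct.add_tmul,
    TensorProduct.tmul_add]
  module

section
variable {q} (hinv : ∀ w : A, q * w * q = q * w)
include hinv

lemma P1 (a b : A) : DEl6 c q a * DEl6 c q b =
    (sEl6 c q a * sEl6 c q b) ⊗ₜ[K] (1 : A) + sEl6 c q a ⊗ₜ[K] sEl6 c q b
      + sEl6 c q b ⊗ₜ[K] sEl6 c q a + (1 : A) ⊗ₜ[K] (sEl6 c q a * sEl6 c q b)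
      + (1 - c * c) • ((q * (a * b)) ⊗ₜ[K] q)
      + (1 - c * c) • ((q * a) ⊗ₜ[K] (q * b))
      + (1 - c * c) • ((q * b) ⊗ₜ[K] (q * a))
      + (1 - c * c) • (q ⊗ₜ[K] (q * (a * b))) := by
  simp only [DEl6, add_mul, mul_add, smul_mul_assoc, mul_smul_comm,
    Algebra.TensorProduct.tmul_mul_tmul, one_mul, mul_one,
    m2 hinv, m3 hinv, m4 c hinv, m5 c hinv, m6 c hinv, m7 c hinv, m8 hinv, hq6 hinv,
    ← TensorProduct.smul_tmul', TensorProduct.tmul_smul, smul_smul]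
  module

lemma P2 (a : A) : DEl6 c q a * (q ⊗ₜ[K] q) = (q * a) ⊗ₜ[K] q + q ⊗ₜ[K] (q * a) := by
  simp only [DEl6, add_mul, smul_mul_assoc, Algebra.TensorProduct.tmul_mul_tmul,
    one_mul, mul_one, m2 hinv, m3 hinv, m4 c hinv, hq6 hinv,
    ← TensorProduct.smul_tmul', TensorProduct.tmul_smul, smul_smul]
  module

lemma P3 (a b : A) :
    ((q * a) ⊗ₜ[K] q + q ⊗ₜ[K] (q * a)) * DEl6 c q b =
      (q * (a * b)) ⊗ₜ[K] q + (q * a) ⊗ₜ[K] (q * b) + (q * b) ⊗ₜ[K] (q * a)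
        + q ⊗ₜ[K] (q * (a * b)) := by
  simp only [DEl6, add_mul, mul_add, smul_mul_assoc, mul_smul_comm,
    Algebra.TensorProduct.tmul_mul_tmul, one_mul, mul_one,
    m2 hinv, m3 hinv, m5 c hinv, m7 c hinv, m8 hinv, hq6 hinv,
    ← TensorProduct.smul_tmul', TensorProduct.tmul_smul, smul_smul]
  module

lemma P4 (a b : A) :
    ((sEl6 c q a * sEl6 c q b) ⊗ₜ[K] (1 : A) + sEl6 c q a ⊗ₜ[K] sEl6 c q b
      + sEl6 c q b ⊗ₜ[K] sEl6 c q a + (1 : A) ⊗ₜ[K] (sEl6 c q a * sEl6 c q b)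
      + (1 - c * c) • ((q * (a * b)) ⊗ₜ[K] q)
      + (1 - c * c) • ((q * a) ⊗ₜ[K] (q * b))
      + (1 - c * c) • ((q * b) ⊗ₜ[K] (q * a))
      + (1 - c * c) • (q ⊗ₜ[K] (q * (a * b)))) * (q ⊗ₜ[K] q) =
      (q * (a * b)) ⊗ₜ[K] q + (q * a) ⊗ₜ[K] (q * b) + (q * b) ⊗ₜ[K] (q * a)
        + q ⊗ₜ[K] (q * (a * b)) := by
  simp only [add_mul, smul_mul_assoc, Algebra.TensorProduct.tmul_mul_tmul,
    one_mul, mul_one, m2 hinv, m3 hinv, m4 c hinv, m10 c hinv, hq6 hinv,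
    ← TensorProduct.smul_tmul', TensorProduct.tmul_smul, smul_smul]
  module

theorem key6 {u v z : A}
    (hz : z = u * v - v * u - u * v * q + v * u * q + c • (u * q * v) - c • (v * q * u)) :
    DEl6 c q z = DEl6 c q u * DEl6 c q v - DEl6 c q v * DEl6 c q u
      - DEl6 c q u * DEl6 c q v * (q ⊗ₜ[K] q) + DEl6 c q v * DEl6 c q u * (q ⊗ₜ[K] q)
      + c • (DEl6 c q u * (q ⊗ₜ[K] q) * DEl6 c q v)
      - c • (DEl6 c q v * (q ⊗ₜ[K] q) * DEl6 c q u) := by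
  rw [P1 c hinv u v, P1 c hinv v u, P2 c hinv u, P2 c hinv v, P3 c hinv u v, P3 c hinv v u,
    P4 c hinv u v, P4 c hinv v u]
  rw [show DEl6 c q z = sEl6 c q z ⊗ₜ[K] (1 : A) + (1 : A) ⊗ₜ[K] sEl6 c q z
      + (1 - c) • ((q * z) ⊗ₜ[K] q) + (1 - c) • (q ⊗ₜ[K] (q * z)) from rfl,
    sz6 c hinv hz, qz6 c hinv hz]
  simp only [TensorProduct.sub_tmul, TensorProduct.tmul_sub, smul_sub,
    ← TensorProduct.smul_tmul', TensorProduct.tmul_smul, smul_smul]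
  module

end
end Aux

lemma applyRel6 {K : Type*} [Field K] (c : K) {A' A : Type*} [Ring A'] [Algebra K A']
    [Ring A] [Algebra K A] (f : A' →ₐ[K] (A ⊗[K] A)) (X Y Qh : A') :
    f (X * Y - Y * X - X * Y * Qh + Y * X * Qh + c • (X * Qh * Y) - c • (Y * Qh * X))
      = f X * f Y - f Y * f X - f X * f Y * f Qh + f Y * f X * f Qh
        + c • (f X * f Qh * f Y) - c • (f Y * f Qh * f X) := by
  simp only [map_sub, map_add, map_mul, map_smul]

section Build
variable {K : Type*} [Field K] {J : Type*} {L : Type*} [LieRing L] [LieAlgebra K L]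
  (b : Module.Basis J K L) (c : K)

lemma hUinv6 (u : EnvLie K J L b c) :
    qBar K J L b c * u * qBar K J L b c = qBar K J L b c * u := by
  obtain ⟨a, rfl⟩ := RingQuot.mkAlgHom_surjective K (LieRel K J L b c) u
  obtain ⟨t, rfl⟩ := RingQuot.mkAlgHom_surjective K (InvRel K J) a
  have h1 : qHat K J * RingQuot.mkAlgHom K (InvRel K J) t * qHat K J
      = qHat K J * RingQuot.mkAlgHom K (InvRel K J) t := by
    rw [qHat, ← map_mul, ← map_mul]
    exact RingQuot.mkAlgHom_rel K (InvRel.inv (K := K) (X := J) t)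
  rw [qBar, ← map_mul, ← map_mul, h1, map_mul]

lemma hUq6 : qBar K J L b c * qBar K J L b c = qBar K J L b c := by
  simpa using hUinv6 b c 1

lemma hrelU6 (x y : L) :
    iEnv K J L b c ⁅x, y⁆ =
      iEnv K J L b c x * iEnv K J L b c y - iEnv K J L b c y * iEnv K J L b c x
        - iEnv K J L b c x * iEnv K J L b c y * qBar K J L b c
        + iEnv K J L b c y * iEnv K J L b c x * qBar K J L b c
        + c • (iEnv K J L b c x * qBar K J L b c * iEnv K J L b c y)
        - c • (iEnv K J L b c y * qBar K J L b c * iEnv K J L b c x) := by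
  have h := RingQuot.mkAlgHom_rel K (LieRel.rel (K := K) (b := b) (c := c) x y)
  simp only [map_sub, map_add, map_mul, map_smul] at h
  exact h

end Build
section Build2
variable {K : Type*} [Field K] {J : Type*} {L : Type*} [LieRing L] [LieAlgebra K L]
  (b : Module.Basis J K L) (c : K)

/-- The images of the generators under `Δ`. -/
noncomputable def g6 : (J ⊕ Unit) → (EnvLie K J L b c ⊗[K] EnvLie K J L b c) :=
  Sum.elim (fun j => DEl6 c (qBar K J L b c) (iEnv K J L b c (b j)))
    (fun _ => qBar K J L b c ⊗ₜ[K] qBar K J L b c)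

/-- The lift of `Δ` to the tensor algebra. -/
noncomputable def phi6 :
    TensorAlgebra K (FreeInvModule K J) →ₐ[K] (EnvLie K J L b c ⊗[K] EnvLie K J L b c) :=
  TensorAlgebra.lift K (Finsupp.linearCombination K (g6 b c))

lemma phi6_qTilde : phi6 b c (qTilde K J) = qBar K J L b c ⊗ₜ[K] qBar K J L b c := by
  simp [phi6, qTilde, TensorAlgebra.lift_ι_apply, Finsupp.linearCombination_single, g6]

lemma QwQ6 (w : EnvLie K J L b c ⊗[K] EnvLie K J L b c) :
    (qBar K J L b c ⊗ₜ[K] qBar K J L b c) * w * (qBar K J L b c ⊗ₜ[K] qBar K J L b c)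
      = (qBar K J L b c ⊗ₜ[K] qBar K J L b c) * w := by
  induction w using TensorProduct.induction_on with
  | zero => simp
  | tmul a a' => simp only [Algebra.TensorProduct.tmul_mul_tmul, hUinv6 b c]
  | add x y hx hy => simp only [mul_add, add_mul, hx, hy]

lemma phi6_resp : ∀ ⦃x y⦄, InvRel K J x y → phi6 b c x = phi6 b c y := by
  rintro _ _ (_ | a)
  · rw [map_mul, phi6_qTilde, Algebra.TensorProduct.tmul_mul_tmul, hUq6 b c]
  · rw [map_mul, map_mul, phi6_qTilde, QwQ6]

/-- The lift of `Δ` to the free invariant algebra. -/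
noncomputable def phiHat6 :
    FreeInvAlg K J →ₐ[K] (EnvLie K J L b c ⊗[K] EnvLie K J L b c) :=
  RingQuot.liftAlgHom K ⟨phi6 b c, phi6_resp b c⟩

lemma phiHat6_qHat : phiHat6 b c (qHat K J) = qBar K J L b c ⊗ₜ[K] qBar K J L b c := by
  rw [phiHat6, qHat, RingQuot.liftAlgHom_mkAlgHom_apply]
  exact phi6_qTilde b c

/-- The linear-map version of `x ↦ D(i x)`. -/
noncomputable def DLin6 : L →ₗ[K] EnvLie K J L b c ⊗[K] EnvLie K J L b c where
  toFun x := DEl6 c (qBar K J L b c) (iEnv K J L b c x)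
  map_add' x y := by rw [map_add, DEl6_add]
  map_smul' r x := by rw [map_smul, DEl6_smul]; rfl

lemma DLin6_apply (x : L) :
    DLin6 b c x = DEl6 c (qBar K J L b c) (iEnv K J L b c x) := rfl

lemma phiHat6_lHat (x : L) :
    phiHat6 b c (lHat K J L b x) = DEl6 c (qBar K J L b c) (iEnv K J L b c x) := by
  have h : (phiHat6 b c).toLinearMap ∘ₗ lHat K J L b = DLin6 b c := by
    apply b.ext
    intro j
    rw [DLin6_apply]
    simp only [LinearMap.comp_apply, AlgHom.toLinearMap_apply, lHat,
      LinearEquiv.coe_toLinearMap, Module.Basis.repr_self, Finsupp.lmapDomain_apply,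
      Finsupp.mapDomain_single, phiHat6, RingQuot.liftAlgHom_mkAlgHom_apply, phi6,
      TensorAlgebra.lift_ι_apply, Finsupp.linearCombination_single, one_smul, g6,
      Sum.elim_inl]
  have := LinearMap.congr_fun h x
  simpa [DLin6_apply] using this

set_option maxHeartbeats 1000000 in
set_option synthInstance.maxHeartbeats 1000000 in
lemma phiHat6_resp : ∀ ⦃x y⦄, LieRel K J L b c x y → phiHat6 b c x = phiHat6 b c y := by
  rintro _ _ ⟨x, y⟩
  refine Eq.trans ?_
    (applyRel6 (A := EnvLie K J L b c) c (phiHat6 b c) (lHat K J L b x) (lHat K J L b y)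
      (qHat K J)).symm
  simp only [phiHat6_lHat, phiHat6_qHat]
  exact key6 c (hUinv6 b c) (hrelU6 b c x y)

end Build2

/-- The comultiplication `Δ` on the enveloping⁶ᵗʰ algebra `U` determined by
`Δ(q̄) = q̄⊗q̄` and
`Δ(x) = (x + k q̄x - x q̄)⊗1 + 1⊗(x + k q̄x - x q̄) + (1-k) q̄x ⊗ q̄ + (1-k) q̄ ⊗ q̄x`
for `x ∈ L` is a well-defined algebra homomorphism `U → U ⊗ U`; i.e. `Δ` kills the defining
relations of `U`. -/
theorem envLie_comultiplication (J : Type*) (L : Type*) [LieRing L] [LieAlgebra K L]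
    (b : Module.Basis J K L) (c : K) (hc : c ≠ 0) :
    ∃ Δ : EnvLie K J L b c →ₐ[K] (EnvLie K J L b c ⊗[K] EnvLie K J L b c),
      (Δ (qBar K J L b c) = qBar K J L b c ⊗ₜ[K] qBar K J L b c) ∧
      (∀ x : L,
        Δ (iEnv K J L b c x) =
          (iEnv K J L b c x + c • (qBar K J L b c * iEnv K J L b c x)
              - iEnv K J L b c x * qBar K J L b c) ⊗ₜ[K] (1 : EnvLie K J L b c)
          + (1 : EnvLie K J L b c) ⊗ₜ[K]
              (iEnv K J L b c x + c • (qBar K J L b c * iEnv K J L b c x)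
                - iEnv K J L b c x * qBar K J L b c)
          + (1 - c) • ((qBar K J L b c * iEnv K J L b c x) ⊗ₜ[K] qBar K J L b c)
          + (1 - c) • (qBar K J L b c ⊗ₜ[K] (qBar K J L b c * iEnv K J L b c x))) := by
  refine ⟨RingQuot.liftAlgHom K ⟨phiHat6 b c, phiHat6_resp b c⟩, ?_, ?_⟩
  · rw [qBar, RingQuot.liftAlgHom_mkAlgHom_apply]
    exact phiHat6_qHat b c
  · intro x
    have h1 : iEnv K J L b c x = RingQuot.mkAlgHom K (LieRel K J L b c) (lHat K J L b x) := rfl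
    rw [h1, RingQuot.liftAlgHom_mkAlgHom_apply, phiHat6_lHat, ← h1]
    rfl
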